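/- If G is a finite connected simple graph of diameter d and (v_0, v_1, …, v_d) is a path in G realizing the diameter, i.e., d(v_0, v_d) = d and consecutive vertices are adjacent, then V(G) \ {v_1, v_2, …, v_d} is a resolving set of G. -/

import Mathlib

open SimpleGraph

/-- `W` is a resolving set for `G`: any two distinct vertices are distinguished
by their distance to some vertex of `W`. -/
def IsResolvingSet {V : Type*} (G : SimpleGraph V) (W : Finset V) : Prop :=
  ∀ u v : V, u ≠ v → ∃ w ∈ W, G.dist u w ≠ G.dist v w

/-- The metric dimension of `G`: the minimum cardinality of a resolving set. -/
noncomputable def metricDim {V : Type*} (G : SimpleGraph V) : ℕ :=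
  sInf {k | ∃ W : Finset V, IsResolvingSet G W ∧ W.card = k}

/-- `B` is a metric basis: a resolving set of minimum cardinality. -/
def IsMetricBasis {V : Type*} (G : SimpleGraph V) (B : Finset V) : Prop :=
  IsResolvingSet G B ∧ B.card = metricDim G

/-- `G` is uniquely dimensional: it has exactly one metric basis. -/
def UniquelyDimensional {V : Type*} (G : SimpleGraph V) : Prop :=
  ∃! B : Finset V, IsMetricBasis G B

/-- `G` is uniquely `k`-dimensional: a unique metric basis and metric dimension `k`. -/
def UniquelyKDimensional {V : Type*} (G : SimpleGraph V) (k : ℕ) : Prop :=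
  UniquelyDimensional G ∧ metricDim G = k

theorem stmt3 {V : Type*} [Fintype V] [DecidableEq V] (G : SimpleGraph V)
    (hconn : G.Connected) (d : ℕ) (hd : G.diam = d) (p : Fin (d + 1) → V)
    (hadj : ∀ i : Fin d, G.Adj (p i.castSucc) (p i.succ))
    (hdist : G.dist (p 0) (p (Fin.last d)) = d) :
    IsResolvingSet G
      (Finset.univ \ Finset.image (fun i : Fin d => p i.succ) Finset.univ) := by
  -- forward distance bound
  have hfwd : ∀ n (hn : n ≤ d), G.dist (p 0) (p ⟨n, Nat.lt_succ_of_le hn⟩) ≤ n := by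
    intro n
    induction n with
    | zero => intro _; simp [SimpleGraph.dist_self]  -- p 0 = p ⟨0,_⟩
    | succ m ih =>
      intro hn
      have hm : m ≤ d := Nat.le_of_succ_le hn
      have hadj' := hadj ⟨m, hn⟩
      have h1 : G.dist (p ⟨m, Nat.lt_succ_of_le hm⟩) (p ⟨m + 1, Nat.lt_succ_of_le hn⟩) = 1 := by
        rw [SimpleGraph.dist_eq_one_iff_adj]
        convert hadj' using 2 <;> rfl
      calc G.dist (p 0) (p ⟨m + 1, Nat.lt_succ_of_le hn⟩)
          ≤ G.dist (p 0) (p ⟨m, Nat.lt_succ_of_le hm⟩)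
            + G.dist (p ⟨m, Nat.lt_succ_of_le hm⟩) (p ⟨m + 1, Nat.lt_succ_of_le hn⟩) :=
            hconn.dist_triangle
        _ ≤ m + 1 := by rw [h1]; exact Nat.add_le_add_right (ih hm) 1
  -- backward distance bound
  have hbwd' : ∀ k n (hn : n ≤ d), d - n = k →
      G.dist (p ⟨n, Nat.lt_succ_of_le hn⟩) (p (Fin.last d)) ≤ d - n := by
    intro k
    induction k with
    | zero =>
      intro n hn hk
      have : n = d := by omega
      subst this
      have : (⟨n, Nat.lt_succ_of_le hn⟩ : Fin (n + 1)) = Fin.last n := by simp [Fin.ext_iff]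
      rw [this, SimpleGraph.dist_self]
      exact Nat.zero_le _
    | succ k ih =>
      intro n hn hk
      have hnd : n < d := by omega
      have hadj' := hadj ⟨n, hnd⟩
      have h1 : G.dist (p ⟨n, Nat.lt_succ_of_le hn⟩) (p ⟨n + 1, Nat.lt_succ_of_le hnd⟩) = 1 := by
        rw [SimpleGraph.dist_eq_one_iff_adj]
        convert hadj' using 2 <;> rfl
      have ih' := ih (n + 1) hnd (by omega)
      calc G.dist (p ⟨n, Nat.lt_succ_of_le hn⟩) (p (Fin.last d))
          ≤ G.dist (p ⟨n, Nat.lt_succ_of_le hn⟩) (p ⟨n + 1, Nat.lt_succ_of_le hnd⟩)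
            + G.dist (p ⟨n + 1, Nat.lt_succ_of_le hnd⟩) (p (Fin.last d)) := hconn.dist_triangle
        _ ≤ 1 + (d - (n + 1)) := by rw [h1]; exact Nat.add_le_add_left ih' 1
        _ = k + 1 := by omega
        _ = d - n := by omega
  have hbwd : ∀ n (hn : n ≤ d), G.dist (p ⟨n, Nat.lt_succ_of_le hn⟩) (p (Fin.last d)) ≤ d - n :=
    fun n hn => hbwd' (d - n) n hn rfl
  -- exact distance from p 0
  have hexact : ∀ n (hn : n ≤ d), G.dist (p 0) (p ⟨n, Nat.lt_succ_of_le hn⟩) = n := by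
    intro n hn
    have h1 := hfwd n hn
    have h2 := hbwd n hn
    have h3 := hconn.dist_triangle (u := p 0) (v := p ⟨n, Nat.lt_succ_of_le hn⟩)
      (w := p (Fin.last d))
    rw [hdist] at h3
    omega
  -- p 0 is in W
  have hp0 : p 0 ∉ Finset.image (fun i : Fin d => p i.succ) Finset.univ := by
    simp only [Finset.mem_image, Finset.mem_univ, true_and, not_exists]
    intro i hi
    have h1 : G.dist (p 0) (p ⟨(i : ℕ) + 1, Nat.lt_succ_of_le i.2⟩) = (i : ℕ) + 1 :=
      hexact _ i.2
    have h2 : (i.succ : Fin (d + 1)) = ⟨(i : ℕ) + 1, Nat.lt_succ_of_le i.2⟩ := by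
      simp [Fin.ext_iff]
    rw [h2] at hi
    rw [← hi, SimpleGraph.dist_self] at h1
    omega
  intro u v huv
  by_cases hu : u ∈ Finset.image (fun i : Fin d => p i.succ) Finset.univ
  · by_cases hv : v ∈ Finset.image (fun i : Fin d => p i.succ) Finset.univ
    · -- both on the path: use p 0
      refine ⟨p 0, by simp [hp0], ?_⟩
      obtain ⟨i, -, hi⟩ := Finset.mem_image.mp hu
      obtain ⟨j, -, hj⟩ := Finset.mem_image.mp hv
      have hsi : (i.succ : Fin (d + 1)) = ⟨(i : ℕ) + 1, Nat.lt_succ_of_le i.2⟩ := by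
        simp [Fin.ext_iff]
      have hsj : (j.succ : Fin (d + 1)) = ⟨(j : ℕ) + 1, Nat.lt_succ_of_le j.2⟩ := by
        simp [Fin.ext_iff]
      have hij : (i : ℕ) ≠ (j : ℕ) := by
        intro h
        apply huv
        rw [← hi, ← hj]
        have : i = j := Fin.ext h
        rw [this]
      rw [← hi, ← hj, hsi, hsj, SimpleGraph.dist_comm, hexact _ i.2, SimpleGraph.dist_comm,
        hexact _ j.2]
      omega
    · -- v not on path: use v itself
      refine ⟨v, by simp [hv], ?_⟩
      rw [SimpleGraph.dist_self]
      exact fun h => huv ((hconn.dist_eq_zero_iff).mp h)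
  · refine ⟨u, by simp [hu], ?_⟩
    rw [SimpleGraph.dist_self]
    exact fun h => huv ((hconn.dist_eq_zero_iff).mp h.symm).symm
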